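/- For the bilinear form T_{2,p} : ℓ_p² × ℓ_p² → ℝ, T_{2,p}(x,y) = x₁y₁+x₁y₂+x₂y₁−x₂y₂ with p > 1, the operator norm equals sup_{x∈[0,1]} ((1+x)^{p*}+(1−x)^{p*})^{1/p*} / (1+x^p)^{1/p}, where p* = p/(p−1). -/

import Mathlib

open Real Finset

private noncomputable def gf (p t : ℝ) : ℝ :=
  ((1 + t) ^ (p / (p - 1)) + (1 - t) ^ (p / (p - 1))) ^ ((p - 1) / p) / (1 + t ^ p) ^ (1 / p)

private lemma key_nonneg {p : ℝ} (hp : 1 < p) {M a b : ℝ}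
    (hM : ∀ t ∈ Set.Icc (0:ℝ) 1, gf p t ≤ M) (hb : 0 ≤ b) (hba : b ≤ a) :
    ((a + b) ^ (p / (p - 1)) + (a - b) ^ (p / (p - 1))) ^ ((p - 1) / p)
      ≤ M * (a ^ p + b ^ p) ^ (1 / p) := by
  have hp0 : (0:ℝ) < p := lt_trans one_pos hp
  have hp1 : p - 1 ≠ 0 := by linarith
  have hq0 : (0:ℝ) < p / (p - 1) := div_pos hp0 (by linarith)
  have ha0 : 0 ≤ a := hb.trans hba
  rcases ha0.eq_or_lt with h | ha
  · have hb0 : b = 0 := le_antisymm (by linarith) hb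
    subst hb0
    rw [← h]
    simp [Real.zero_rpow (ne_of_gt hq0),
      Real.zero_rpow (show (p-1)/p ≠ 0 by positivity),
      Real.zero_rpow (ne_of_gt hp0), Real.zero_rpow (inv_ne_zero (ne_of_gt hp0))]
  · set t := b / a with htdef
    have ht0 : 0 ≤ t := div_nonneg hb ha.le
    have ht1 : t ≤ 1 := (div_le_one ha).mpr hba
    have hgt := hM t ⟨ht0, ht1⟩
    have hb' : b = a * t := by rw [htdef]; field_simp
    have h1t : (0:ℝ) ≤ 1 + t := by linarith
    have h1t' : (0:ℝ) ≤ 1 - t := by linarith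
    set S : ℝ := (1 + t) ^ (p / (p - 1)) + (1 - t) ^ (p / (p - 1)) with hSdef
    have hS0 : 0 ≤ S := add_nonneg (Real.rpow_nonneg h1t _) (Real.rpow_nonneg h1t' _)
    set D : ℝ := (1 + t ^ p) ^ (1 / p) with hDdef
    have hD0 : 0 < D := Real.rpow_pos_of_pos (by positivity) _
    have hgt' : S ^ ((p - 1) / p) ≤ M * D := by
      rw [← div_le_iff₀ hD0]
      exact hgt
    have eL : (a + b) ^ (p / (p - 1)) + (a - b) ^ (p / (p - 1)) = a ^ (p / (p - 1)) * S := by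
      rw [show a + b = a * (1 + t) by rw [hb']; ring,
        show a - b = a * (1 - t) by rw [hb']; ring,
        Real.mul_rpow ha.le h1t, Real.mul_rpow ha.le h1t', hSdef]
      ring
    have eA : (a ^ (p / (p - 1))) ^ ((p - 1) / p) = a := by
      rw [← Real.rpow_mul ha.le, show p / (p - 1) * ((p - 1) / p) = 1 by field_simp,
        Real.rpow_one]
    have eLHS : ((a + b) ^ (p / (p - 1)) + (a - b) ^ (p / (p - 1))) ^ ((p - 1) / p)
        = a * S ^ ((p - 1) / p) := by
      rw [eL, Real.mul_rpow (Real.rpow_nonneg ha.le _) hS0, eA]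
    have eRHS : (a ^ p + b ^ p) ^ (1 / p) = a * D := by
      rw [show a ^ p + b ^ p = a ^ p * (1 + t ^ p) by
          rw [hb', Real.mul_rpow ha.le ht0]; ring,
        Real.mul_rpow (Real.rpow_nonneg ha.le _) (by positivity), hDdef]
      congr 1
      rw [← Real.rpow_mul ha.le, mul_one_div, div_self (ne_of_gt hp0), Real.rpow_one]
    rw [eLHS, eRHS]
    calc a * S ^ ((p - 1) / p) ≤ a * (M * D) :=
          mul_le_mul_of_nonneg_left hgt' ha.le
      _ = M * (a * D) := by ring

private lemma key {p : ℝ} (hp : 1 < p) {M : ℝ}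
    (hM : ∀ t ∈ Set.Icc (0:ℝ) 1, gf p t ≤ M) (a b : ℝ) :
    (|a + b| ^ (p / (p - 1)) + |a - b| ^ (p / (p - 1))) ^ ((p - 1) / p)
      ≤ M * (|a| ^ p + |b| ^ p) ^ (1 / p) := by
  have h1 := key_nonneg hp hM (le_min (abs_nonneg a) (abs_nonneg b))
    (min_le_max (a := |a|) (b := |b|))
  rw [max_add_min, max_sub_min_eq_abs] at h1
  have e3 : max |a| |b| ^ p + min |a| |b| ^ p = |a| ^ p + |b| ^ p := by
    rcases le_total |a| |b| with h | h
    · rw [max_eq_right h, min_eq_left h, add_comm]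
    · rw [max_eq_left h, min_eq_right h]
  rw [e3] at h1
  have e4 : |a + b| ^ (p / (p - 1)) + |a - b| ^ (p / (p - 1))
      = (|a| + |b|) ^ (p / (p - 1)) + |(|b| - |a|)| ^ (p / (p - 1)) := by
    rcases le_total 0 a with ha | ha <;> rcases le_total 0 b with hb | hb
    · rw [abs_of_nonneg ha, abs_of_nonneg hb, abs_of_nonneg (by linarith : (0:ℝ) ≤ a + b),
        abs_sub_comm]
    · rw [abs_of_nonneg ha, abs_of_nonpos hb, abs_of_nonneg (by linarith : (0:ℝ) ≤ a - b),
        show -b - a = -(a + b) from by ring, abs_neg, show a + -b = a - b from by ring]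
      exact add_comm _ _
    · rw [abs_of_nonpos ha, abs_of_nonneg hb, abs_of_nonpos (by linarith : a - b ≤ 0),
        show b - -a = a + b from by ring, show -(a - b) = -a + b from by ring]
      exact add_comm _ _
    · rw [abs_of_nonpos ha, abs_of_nonpos hb, abs_of_nonpos (by linarith : a + b ≤ 0),
        show -b - -a = a - b from by ring, show -a + -b = -(a + b) from by ring]
  rw [e4]
  exact h1

/-- For `p > 1` the bilinear form `T_{2,p}(x,y) = x₁y₁+x₁y₂+x₂y₁−x₂y₂` on
`ℓ_p² × ℓ_p²` has operator norm
`sup_{x∈[0,1]} ((1+x)^{p*}+(1−x)^{p*})^{1/p*} / (1+x^p)^{1/p}`, `p* = p/(p−1)`. -/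
theorem stmt18 (p : ℝ) (hp : 1 < p) [Fact (1 ≤ ENNReal.ofReal p)]
    (T : (PiLp (ENNReal.ofReal p) fun _ : Fin 2 => ℝ) →L[ℝ]
      (PiLp (ENNReal.ofReal p) fun _ : Fin 2 => ℝ) →L[ℝ] ℝ)
    (hT : ∀ x y : PiLp (ENNReal.ofReal p) fun _ : Fin 2 => ℝ,
      T x y = x 0 * y 0 + x 0 * y 1 + x 1 * y 0 - x 1 * y 1) :
    ‖T‖ = ⨆ x : Set.Icc (0 : ℝ) 1,
      ((1 + (x : ℝ)) ^ (p / (p - 1)) + (1 - (x : ℝ)) ^ (p / (p - 1))) ^ ((p - 1) / p)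
        / (1 + (x : ℝ) ^ p) ^ (1 / p) := by
  have hp0 : (0:ℝ) < p := lt_trans one_pos hp
  have hp1 : p - 1 ≠ 0 := by linarith
  set q : ℝ := p / (p - 1) with hqdef
  have hpq : p.HolderConjugate q := (Real.holderConjugate_iff_eq_conjExponent hp).mpr rfl
  have hq1 : 1 < q := hpq.symm.lt
  have hq0 : (0:ℝ) < q := by linarith
  have hptr : (ENNReal.ofReal p).toReal = p := ENNReal.toReal_ofReal hp0.le
  have hnorm : ∀ z : PiLp (ENNReal.ofReal p) fun _ : Fin 2 => ℝ,
      ‖z‖ = (|z 0| ^ p + |z 1| ^ p) ^ (1 / p) := by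
    intro z
    rw [PiLp.norm_eq_sum (by rw [hptr]; exact hp0)]
    simp [hptr, Fin.sum_univ_two, Real.norm_eq_abs]
  -- helper for x * x ^ (q-1) = x ^ q
  have hmul : ∀ x : ℝ, 0 ≤ x → x * x ^ (q - 1) = x ^ q := by
    intro x hx
    rcases hx.eq_or_lt with h | h
    · rw [← h, Real.zero_rpow (ne_of_gt hq0), Real.zero_rpow (by linarith : q - 1 ≠ 0), mul_zero]
    · rw [show q = 1 + (q - 1) from by ring, Real.rpow_add h, Real.rpow_one,
        show 1 + (q - 1) - 1 = q - 1 from by ring]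
  -- lower bound: each gf value is at most ‖T‖
  have hlow : ∀ t : ℝ, t ∈ Set.Icc (0:ℝ) 1 → gf p t ≤ ‖T‖ := by
    intro t ht
    obtain ⟨ht0, ht1⟩ := ht
    have h1t : (0:ℝ) ≤ 1 + t := by linarith
    have h1t' : (0:ℝ) ≤ 1 - t := by linarith
    set u : PiLp (ENNReal.ofReal p) fun _ : Fin 2 => ℝ := WithLp.toLp _ ![1, t] with hu
    set v : PiLp (ENNReal.ofReal p) fun _ : Fin 2 => ℝ :=
      WithLp.toLp _ ![(1 + t) ^ (q - 1), (1 - t) ^ (q - 1)] with hv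
    set S : ℝ := (1 + t) ^ q + (1 - t) ^ q with hSdef
    have hS0 : 0 < S := lt_of_lt_of_le one_pos
      (le_add_of_le_of_nonneg (Real.one_le_rpow (by linarith) hq0.le) (Real.rpow_nonneg h1t' _))
    have hTuv : T u v = S := by
      rw [hT]
      show 1 * (1 + t) ^ (q - 1) + 1 * (1 - t) ^ (q - 1) + t * (1 + t) ^ (q - 1)
          - t * (1 - t) ^ (q - 1) = S
      have e1 := hmul (1 + t) h1t
      have e2 := hmul (1 - t) h1t'
      rw [hSdef]
      nlinarith [e1, e2]
    have hnu : ‖u‖ = (1 + t ^ p) ^ (1 / p) := by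
      rw [hnorm]
      show (|(1:ℝ)| ^ p + |t| ^ p) ^ (1 / p) = _
      rw [abs_one, Real.one_rpow, abs_of_nonneg ht0]
    have hnv : ‖v‖ = S ^ (1 / p) := by
      rw [hnorm]
      show (|(1 + t) ^ (q - 1)| ^ p + |(1 - t) ^ (q - 1)| ^ p) ^ (1 / p) = _
      rw [abs_of_nonneg (Real.rpow_nonneg h1t _), abs_of_nonneg (Real.rpow_nonneg h1t' _),
        ← Real.rpow_mul h1t, ← Real.rpow_mul h1t',
        show (q - 1) * p = q from by rw [hqdef]; field_simp; ring, hSdef]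
    have hle := T.le_opNorm₂ u v
    rw [hTuv, hnu, hnv, Real.norm_eq_abs, abs_of_pos hS0] at hle
    have hD0 : (0:ℝ) < (1 + t ^ p) ^ (1 / p) :=
      Real.rpow_pos_of_pos (by positivity) _
    have hSp : (0:ℝ) < S ^ (1 / p) := Real.rpow_pos_of_pos hS0 _
    have hsplit : S ^ ((p - 1) / p) * S ^ (1 / p) = S := by
      rw [← Real.rpow_add hS0, show (p - 1) / p + 1 / p = 1 from by field_simp; ring, Real.rpow_one]
    show S ^ ((p - 1) / p) / (1 + t ^ p) ^ (1 / p) ≤ ‖T‖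
    rw [div_le_iff₀ hD0]
    have h2 : S ^ ((p - 1) / p) * S ^ (1 / p) ≤ ‖T‖ * (1 + t ^ p) ^ (1 / p) * S ^ (1 / p) := by
      rw [hsplit]; exact hle
    exact le_of_mul_le_mul_right h2 hSp
  haveI : Nonempty (Set.Icc (0:ℝ) 1) := ⟨⟨0, by norm_num⟩⟩
  have hbdd : BddAbove (Set.range fun x : Set.Icc (0:ℝ) 1 => gf p ↑x) := by
    refine ⟨‖T‖, ?_⟩
    rintro _ ⟨x, rfl⟩
    exact hlow x x.2
  have hMt : ∀ t ∈ Set.Icc (0:ℝ) 1, gf p t ≤ ⨆ x : Set.Icc (0:ℝ) 1, gf p ↑x :=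
    fun t ht => le_ciSup hbdd ⟨t, ht⟩
  have hgf0 : 0 ≤ gf p 0 := by
    unfold gf
    positivity
  have hM0 : (0:ℝ) ≤ ⨆ x : Set.Icc (0:ℝ) 1, gf p ↑x :=
    le_trans hgf0 (hMt 0 ⟨le_refl 0, zero_le_one⟩)
  have hqe : 1 / q = (p - 1) / p := by rw [hqdef, one_div_div]
  show ‖T‖ = ⨆ x : Set.Icc (0:ℝ) 1, gf p ↑x
  apply le_antisymm
  · apply T.opNorm_le_bound₂ hM0
    intro x y
    rw [hT, hnorm x, hnorm y, Real.norm_eq_abs]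
    have hhold : ∀ d0 d1 : ℝ, d0 * y 0 + d1 * y 1
        ≤ (|d0| ^ q + |d1| ^ q) ^ (1 / q) * (|y 0| ^ p + |y 1| ^ p) ^ (1 / p) := by
      intro d0 d1
      have h := Real.inner_le_Lp_mul_Lq (Finset.univ) ![d0, d1] ![y 0, y 1] hpq.symm
      simpa [Fin.sum_univ_two] using h
    have hK := key hp hMt (x 0) (x 1)
    have hYnn : (0:ℝ) ≤ (|y 0| ^ p + |y 1| ^ p) ^ (1 / p) :=
      Real.rpow_nonneg (by positivity) _
    have habs : |x 0 * y 0 + x 0 * y 1 + x 1 * y 0 - x 1 * y 1|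
        ≤ (|x 0 + x 1| ^ q + |x 0 - x 1| ^ q) ^ (1 / q)
          * (|y 0| ^ p + |y 1| ^ p) ^ (1 / p) := by
      rw [abs_le]
      constructor
      · have h := hhold (-(x 0 + x 1)) (-(x 0 - x 1))
        rw [abs_neg, abs_neg] at h
        nlinarith [h]
      · have h := hhold (x 0 + x 1) (x 0 - x 1)
        nlinarith [h]
    have hKM : (|x 0 + x 1| ^ q + |x 0 - x 1| ^ q) ^ (1 / q)
        ≤ (⨆ x : Set.Icc (0:ℝ) 1, gf p ↑x) * (|x 0| ^ p + |x 1| ^ p) ^ (1 / p) := by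
      rw [hqe]
      exact hK
    calc |x 0 * y 0 + x 0 * y 1 + x 1 * y 0 - x 1 * y 1|
        ≤ (|x 0 + x 1| ^ q + |x 0 - x 1| ^ q) ^ (1 / q)
          * (|y 0| ^ p + |y 1| ^ p) ^ (1 / p) := habs
      _ ≤ ((⨆ x : Set.Icc (0:ℝ) 1, gf p ↑x) * (|x 0| ^ p + |x 1| ^ p) ^ (1 / p))
          * (|y 0| ^ p + |y 1| ^ p) ^ (1 / p) := mul_le_mul_of_nonneg_right hKM hYnn
      _ = (⨆ x : Set.Icc (0:ℝ) 1, gf p ↑x) * (|x 0| ^ p + |x 1| ^ p) ^ (1 / p)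
          * (|y 0| ^ p + |y 1| ^ p) ^ (1 / p) := by ring
  · exact ciSup_le fun x => hlow x x.2
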